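/- Let p ∈ S₊^{n+1}, η ∈ ℝ^{n+2} a unit vector with ⟨η,p⟩ = 0, and t > 0. Define η_t = (η + (t−1)⟨η,p₀⟩p₀)/√(1 + (t²−1)⟨η,p₀⟩²). Then ‖η_t‖ = 1 and ⟨η_t, C_t(p)⟩ = 0, where C_t(p) = m_t(p)/‖m_t(p)‖ and m_t(p) = (p₁,…,p_{n+1},p_{n+2}/t). -/
import Mathlib


open scoped RealInnerProductSpace

/-- If `p` is in the open upper hemisphere, `η` is a unit vector tangent to the sphere at
`p` and `t > 0`, then `η_t = (η + (t−1)⟨η,p₀⟩p₀)/√(1 + (t²−1)⟨η,p₀⟩²)` is a unit vector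
and is orthogonal to `C_t(p) = m_t(p)/‖m_t(p)‖`, where `m_t(p) = p + (1/t − 1)⟨p,p₀⟩ p₀`
(division of the last coordinate by `t`). -/
theorem transformed_normal_vector
    (n : ℕ) (p₀ p η : EuclideanSpace ℝ (Fin (n + 2)))
    (hp₀ : ‖p₀‖ = 1) (hp : ‖p‖ = 1) (hphem : 0 < ⟪p, p₀⟫)
    (hη : ‖η‖ = 1) (hηp : ⟪η, p⟫ = 0) (t : ℝ) (ht : 0 < t)
    (ηt : EuclideanSpace ℝ (Fin (n + 2)))
    (hηt : ηt = (Real.sqrt (1 + (t ^ 2 - 1) * ⟪η, p₀⟫ ^ 2))⁻¹ •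
      (η + ((t - 1) * ⟪η, p₀⟫) • p₀))
    (mtp : EuclideanSpace ℝ (Fin (n + 2)))
    (hmtp : mtp = p + ((1 / t - 1) * ⟪p, p₀⟫) • p₀) :
    ‖ηt‖ = 1 ∧ ⟪ηt, ‖mtp‖⁻¹ • mtp⟫ = 0 := by
  have ht0 : t ≠ 0 := ht.ne'
  set a := ⟪η, p₀⟫ with ha
  have ha2 : a ^ 2 ≤ 1 := by
    have h := abs_real_inner_le_norm η p₀
    rw [hη, hp₀] at h
    nlinarith [abs_nonneg a, sq_abs a]
  have hD : 0 < 1 + (t ^ 2 - 1) * a ^ 2 := by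
    rcases lt_or_ge (a ^ 2) 1 with h | h
    · nlinarith [sq_nonneg (t * a)]
    · nlinarith [mul_pos ht ht]
  have hpp0 : ⟪p₀, p₀⟫ = (1 : ℝ) := by
    rw [real_inner_self_eq_norm_mul_norm, hp₀]; ring
  have hηη : ⟪η, η⟫ = (1 : ℝ) := by
    rw [real_inner_self_eq_norm_mul_norm, hη]; ring
  have hvv : ⟪η + ((t - 1) * a) • p₀, η + ((t - 1) * a) • p₀⟫ = 1 + (t ^ 2 - 1) * a ^ 2 := by
    simp only [inner_add_left, inner_add_right, real_inner_smul_left, real_inner_smul_right,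
      hpp0, hηη]
    have h2 : ⟪p₀, η⟫ = a := real_inner_comm η p₀ ▸ ha.symm
    rw [h2]; ring
  have hnorm : ‖η + ((t - 1) * a) • p₀‖ = Real.sqrt (1 + (t ^ 2 - 1) * a ^ 2) := by
    rw [← Real.sqrt_sq (norm_nonneg _), ← real_inner_self_eq_norm_sq, hvv]
  have hsqrt : Real.sqrt (1 + (t ^ 2 - 1) * a ^ 2) ≠ 0 := by
    positivity
  constructor
  · rw [hηt, norm_smul, hnorm, Real.norm_eq_abs, abs_inv,
      abs_of_nonneg (Real.sqrt_nonneg _), inv_mul_cancel₀ hsqrt]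
  · rw [hηt, hmtp]
    have hkey : ⟪η + ((t - 1) * a) • p₀, p + ((1 / t - 1) * ⟪p, p₀⟫) • p₀⟫ = (0 : ℝ) := by
      simp only [inner_add_left, inner_add_right, real_inner_smul_left, real_inner_smul_right,
        hpp0, hηp]
      rw [← ha, real_inner_comm p₀ p]
      field_simp
      ring
    rw [real_inner_smul_left, real_inner_smul_right, hkey]
    ring
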